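/- Consider the two-resolution Gaussian delta-function model with background scale M_b = 80 and signal scale M_s = 90, in which each event's resolution equals σ₁ or σ₂ (each with probability 1/2, independent of whether the event is signal or background). For a scale M and cut c, the X_M-cut selects events with (m − M)/σ > c, giving signal efficiency s(M, c) = (1/2)·Q((M + cσ₁ − M_s)/σ₁) + (1/2)·Q((M + cσ₂ − M_s)/σ₂) and background efficiency b(M, c) = (1/2)·Q((M + cσ₁ − M_b)/σ₁) + (1/2)·Q((M + cσ₂ − M_b)/σ₂), where Q(z) = ∫_z^∞ Gauss(x, 0, 1) dx. Then there exist σ₁, σ₂ > 0, a scale M < M_b (i.e. below the zero-resolution background maximum m̃ = 80), and cut values c₁, c₂ ∈ ℝ such that the two selections have equal signal efficiency, s(M, c₁) = s(M_b, c₂), but the selection with M < m̃ has strictly smaller background: b(M, c₁) < b(M_b, c₂). Hence the optimal value of M may be less than the zero-resolution maximum m̃. -/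

import Mathlib

open MeasureTheory Real

/-- The Gaussian probability density with mean `μ` and width `σ`. -/
noncomputable def gauss (x μ σ : ℝ) : ℝ :=
  (1 / (σ * Real.sqrt (2 * Real.pi))) * Real.exp (-(x - μ) ^ 2 / (2 * σ ^ 2))

/-- The standard Gaussian upper tail `Q(z) = ∫_z^∞ Gauss(x, 0, 1) dx`. -/
noncomputable def Qtail (z : ℝ) : ℝ := ∫ x in Set.Ioi z, gauss x 0 1

/-- Signal efficiency of the `X_M > c` cut in the two-resolution Gaussian delta-function
model with signal scale `M_s = 90`. -/
noncomputable def sigEff (σ₁ σ₂ M c : ℝ) : ℝ :=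
  (1 / 2) * Qtail ((M + c * σ₁ - 90) / σ₁) + (1 / 2) * Qtail ((M + c * σ₂ - 90) / σ₂)

/-- Background efficiency of the `X_M > c` cut in the two-resolution Gaussian delta-function
model with background scale `M_b = 80`. -/
noncomputable def bkgEff (σ₁ σ₂ M c : ℝ) : ℝ :=
  (1 / 2) * Qtail ((M + c * σ₁ - 80) / σ₁) + (1 / 2) * Qtail ((M + c * σ₂ - 80) / σ₂)

lemma gauss_eq (x : ℝ) :
    gauss x 0 1 = (1 / Real.sqrt (2 * Real.pi)) * Real.exp (-(1/2) * x ^ 2) := by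
  unfold gauss; ring_nf

lemma sqrt2pi_pos : (0:ℝ) < Real.sqrt (2 * Real.pi) := Real.sqrt_pos.2 (by positivity)

lemma gauss_pos (x : ℝ) : 0 < gauss x 0 1 := by
  rw [gauss_eq]; have := sqrt2pi_pos; positivity

lemma integrable_gauss : Integrable (fun x : ℝ => gauss x 0 1) := by
  have : Integrable (fun x : ℝ => (1 / Real.sqrt (2 * Real.pi)) * Real.exp (-(1/2) * x ^ 2)) :=
    (integrable_exp_neg_mul_sq (by norm_num : (0:ℝ) < 1/2)).const_mul _
  exact this.congr (Filter.Eventually.of_forall fun x => (gauss_eq x).symm)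

lemma Qtail_nonneg (z : ℝ) : 0 ≤ Qtail z :=
  setIntegral_nonneg measurableSet_Ioi (fun x _ => (gauss_pos x).le)

lemma Qtail_anti : Antitone Qtail := by
  intro a b hab
  apply setIntegral_mono_set integrable_gauss.integrableOn
    (Filter.Eventually.of_forall fun x => (gauss_pos x).le)
  exact Filter.Eventually.of_forall (Set.Ioi_subset_Ioi hab)

lemma Qtail_split {a b : ℝ} (hab : a ≤ b) :
    Qtail a = (∫ x in Set.Ioc a b, gauss x 0 1) + Qtail b := by
  unfold Qtail
  rw [← setIntegral_union (Set.Ioc_disjoint_Ioi le_rfl) measurableSet_Ioi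
    integrable_gauss.integrableOn integrable_gauss.integrableOn,
    Set.Ioc_union_Ioi_eq_Ioi hab]

lemma Qtail_continuous : Continuous Qtail := by
  have key : ∀ z : ℝ, Qtail z = Qtail 0 - ∫ x in (0:ℝ)..z, gauss x 0 1 := by
    intro z
    rcases le_total 0 z with h | h
    · have hsplit := Qtail_split h
      rw [intervalIntegral.integral_of_le h]
      linarith
    · have hsplit := Qtail_split h
      rw [intervalIntegral.integral_symm, intervalIntegral.integral_of_le h]
      linarith
  have : Continuous fun z : ℝ => Qtail 0 - ∫ x in (0:ℝ)..z, gauss x 0 1 :=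
    continuous_const.sub (integrable_gauss.continuous_primitive 0)
  exact this.congr fun z => (key z).symm

lemma gauss_le_gauss {x y : ℝ} (h : y ^ 2 ≤ x ^ 2) : gauss x 0 1 ≤ gauss y 0 1 := by
  rw [gauss_eq, gauss_eq]
  have h2 : Real.exp (-(1/2) * x ^ 2) ≤ Real.exp (-(1/2) * y ^ 2) :=
    Real.exp_le_exp.2 (by linarith)
  have := sqrt2pi_pos
  exact mul_le_mul_of_nonneg_left h2 (by positivity)

lemma integrableOn_const_Ioc {a b c : ℝ} :
    IntegrableOn (fun _ : ℝ => c) (Set.Ioc a b) :=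
  integrableOn_const measure_Ioc_lt_top.ne

lemma integral_Ioc_le {a b : ℝ} (ha : 0 ≤ a) (hab : a ≤ b) :
    (∫ x in Set.Ioc a b, gauss x 0 1) ≤ (b - a) * gauss a 0 1 := by
  have h : (∫ x in Set.Ioc a b, gauss x 0 1) ≤ ∫ _x in Set.Ioc a b, gauss a 0 1 := by
    refine setIntegral_mono_on integrable_gauss.integrableOn integrableOn_const_Ioc
      measurableSet_Ioc fun x hx => ?_
    exact gauss_le_gauss (by nlinarith [hx.1, hx.2])
  rwa [setIntegral_const, measureReal_def, Real.volume_Ioc, ENNReal.toReal_ofReal (by linarith),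
    smul_eq_mul] at h

lemma le_integral_Ioc_pos {a b : ℝ} (ha : 0 ≤ a) (hab : a ≤ b) :
    (b - a) * gauss b 0 1 ≤ ∫ x in Set.Ioc a b, gauss x 0 1 := by
  have h : (∫ _x in Set.Ioc a b, gauss b 0 1) ≤ ∫ x in Set.Ioc a b, gauss x 0 1 := by
    refine setIntegral_mono_on integrableOn_const_Ioc integrable_gauss.integrableOn
      measurableSet_Ioc fun x hx => ?_
    exact gauss_le_gauss (by nlinarith [hx.1, hx.2])
  rwa [setIntegral_const, measureReal_def, Real.volume_Ioc, ENNReal.toReal_ofReal (by linarith),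
    smul_eq_mul] at h

lemma le_integral_Ioc_neg {a b : ℝ} (hb : b ≤ 0) (hab : a ≤ b) :
    (b - a) * gauss a 0 1 ≤ ∫ x in Set.Ioc a b, gauss x 0 1 := by
  have h : (∫ _x in Set.Ioc a b, gauss a 0 1) ≤ ∫ x in Set.Ioc a b, gauss x 0 1 := by
    refine setIntegral_mono_on integrableOn_const_Ioc integrable_gauss.integrableOn
      measurableSet_Ioc fun x hx => ?_
    exact gauss_le_gauss (by nlinarith [hx.1, hx.2])
  rwa [setIntegral_const, measureReal_def, Real.volume_Ioc, ENNReal.toReal_ofReal (by linarith),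
    smul_eq_mul] at h

lemma Qtail_le_mills {z : ℝ} (hz : 0 < z) : Qtail z ≤ gauss z 0 1 / z := by
  have key : Qtail z ≤ ∫ x in Set.Ioi z, gauss z 0 1 * Real.exp (z * z) * Real.exp (-z * x) := by
    refine setIntegral_mono_on integrable_gauss.integrableOn
      (((exp_neg_integrableOn_Ioi z hz).const_mul _)) measurableSet_Ioi fun x _hx => ?_
    rw [gauss_eq, gauss_eq, mul_assoc, mul_assoc, ← Real.exp_add, ← Real.exp_add]
    refine mul_le_mul_of_nonneg_left (Real.exp_le_exp.2 ?_) (by have := sqrt2pi_pos; positivity)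
    nlinarith [sq_nonneg (x - z)]
  have hint : (∫ x in Set.Ioi z, Real.exp (-z * x)) = Real.exp (-(z * z)) / z := by
    have h := integral_comp_mul_left_Ioi (fun y => Real.exp (-y)) z hz
    rw [integral_exp_neg_Ioi] at h
    simpa [neg_mul, smul_eq_mul, div_eq_inv_mul] using h
  calc Qtail z ≤ ∫ x in Set.Ioi z, gauss z 0 1 * Real.exp (z * z) * Real.exp (-z * x) := key
    _ = gauss z 0 1 * Real.exp (z * z) * (Real.exp (-(z * z)) / z) := by
        rw [MeasureTheory.integral_const_mul, hint]
    _ = gauss z 0 1 * (Real.exp (z * z) * Real.exp (-(z * z))) / z := by ring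
    _ = gauss z 0 1 / z := by rw [← Real.exp_add, add_neg_cancel, Real.exp_zero, mul_one]

lemma exp_45 : (20:ℝ) ≤ Real.exp 4.5 := by
  have h : Real.exp 4 ≤ Real.exp 4.5 := Real.exp_le_exp.2 (by norm_num)
  have h4 : Real.exp (4:ℝ) = Real.exp 1 ^ 4 := by
    rw [show (4:ℝ) = ((4:ℕ):ℝ) * 1 by norm_num, Real.exp_nat_mul]
  have h27 : (2.7:ℝ) ^ 4 ≤ Real.exp 1 ^ 4 :=
    pow_le_pow_left₀ (by norm_num) (le_of_lt (lt_trans (by norm_num) Real.exp_one_gt_d9)) 4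
  have : (20:ℝ) ≤ (2.7:ℝ)^4 := by norm_num
  linarith [h4 ▸ h27]

lemma exp_neg_122 : (1/4 : ℝ) ≤ Real.exp (-1.22) := by
  have ha : Real.exp (-1.25) ≤ Real.exp (-1.22) := Real.exp_le_exp.2 (by norm_num)
  have hb : Real.exp (-1.25:ℝ) = Real.exp (-1) * Real.exp (-0.25) := by
    rw [← Real.exp_add]; norm_num
  have hc : (0.75:ℝ) ≤ Real.exp (-0.25) := by
    have := Real.add_one_le_exp (-0.25:ℝ); linarith
  have hd : (1/2.7182818286 : ℝ) ≤ Real.exp (-1) := by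
    rw [Real.exp_neg, one_div]
    exact inv_anti₀ (Real.exp_pos 1) Real.exp_one_lt_d9.le
  have hmul : (1/2.7182818286 : ℝ) * 0.75 ≤ Real.exp (-1) * Real.exp (-0.25) :=
    mul_le_mul hd hc (by norm_num) (Real.exp_pos _).le
  have : (1/4:ℝ) ≤ (1/2.7182818286 : ℝ) * 0.75 := by norm_num
  linarith [hb ▸ hmul]

lemma exp_neg_225 : Real.exp (-22.5 : ℝ) ≤ 1/20 := by
  have h1 : Real.exp (-22.5:ℝ) ≤ Real.exp (-4.5) := Real.exp_le_exp.2 (by norm_num)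
  have h2 : Real.exp (-4.5:ℝ) = (Real.exp 4.5)⁻¹ := Real.exp_neg 4.5
  have h3 : (Real.exp 4.5)⁻¹ ≤ 1/20 := by
    rw [one_div]
    exact inv_anti₀ (by norm_num) exp_45
  linarith [h2 ▸ h1]

/-- In the two-resolution Gaussian delta-function model with `M_b = 80` and `M_s = 90`, there
exist resolutions `σ₁, σ₂ > 0`, a scale `M < 80` (below the zero-resolution background
maximum `m̃ = 80`), and cut values `c₁, c₂` such that the two selections have equal signal
efficiency, `s(M, c₁) = s(80, c₂)`, but the selection with `M < m̃` has strictly smaller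
background: `b(M, c₁) < b(80, c₂)`.  Hence the optimal value of `M` may be less than the
zero-resolution maximum `m̃`. -/
theorem optimal_scale_may_be_below_endpoint :
    ∃ (σ₁ σ₂ M c₁ c₂ : ℝ), 0 < σ₁ ∧ 0 < σ₂ ∧ M < 80 ∧
      sigEff σ₁ σ₂ M c₁ = sigEff σ₁ σ₂ 80 c₂ ∧
      bkgEff σ₁ σ₂ M c₁ < bkgEff σ₁ σ₂ 80 c₂ := by
  -- explicit forms of the efficiencies for σ₁ = 1, σ₂ = 10
  have sig76 : sigEff 1 10 76 10 = (1/2) * Qtail (-4) + (1/2) * Qtail 8.6 := by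
    unfold sigEff
    rw [show ((76 + 10 * 1 - 90) / 1 : ℝ) = -4 by norm_num,
      show ((76 + 10 * 10 - 90) / 10 : ℝ) = 8.6 by norm_num]
  have sig80 : ∀ c : ℝ, sigEff 1 10 80 c = (1/2) * Qtail (c - 10) + (1/2) * Qtail (c - 1) := by
    intro c
    unfold sigEff
    rw [show ((80 + c * 1 - 90) / 1 : ℝ) = c - 10 by ring,
      show ((80 + c * 10 - 90) / 10 : ℝ) = c - 1 by ring]
  have bkg76 : bkgEff 1 10 76 10 = (1/2) * Qtail 6 + (1/2) * Qtail 9.6 := by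
    unfold bkgEff
    rw [show ((76 + 10 * 1 - 80) / 1 : ℝ) = 6 by norm_num,
      show ((76 + 10 * 10 - 80) / 10 : ℝ) = 9.6 by norm_num]
  have bkg80 : ∀ c : ℝ, bkgEff 1 10 80 c = (1/2) * Qtail c + (1/2) * Qtail c := by
    intro c
    unfold bkgEff
    rw [show ((80 + c * 1 - 80) / 1 : ℝ) = c by ring,
      show ((80 + c * 10 - 80) / 10 : ℝ) = c by ring]
  -- continuity of the signal efficiency of the `M = 80` cut
  have g_cont : Continuous fun c : ℝ => sigEff 1 10 80 c := by
    have : Continuous fun c : ℝ => (1/2) * Qtail (c - 10) + (1/2) * Qtail (c - 1) :=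
      (continuous_const.mul (Qtail_continuous.comp (by continuity))).add
        (continuous_const.mul (Qtail_continuous.comp (by continuity)))
    exact this.congr fun c => (sig80 c).symm
  -- quantitative Gaussian bounds
  have G1 : gauss 5 0 1 / 5 ≤ (1/100) * gauss (-4) 0 1 := by
    rw [gauss_eq, gauss_eq]
    have e1 : Real.exp (-(1/2) * ((-4):ℝ)^2) = Real.exp (-(1/2) * (5:ℝ)^2) * Real.exp 4.5 := by
      rw [← Real.exp_add]; norm_num
    have hp : (0:ℝ) < (1 / Real.sqrt (2*Real.pi)) * Real.exp (-(1/2) * (5:ℝ)^2) := by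
      have := sqrt2pi_pos; positivity
    rw [e1]
    nlinarith [mul_le_mul_of_nonneg_left exp_45 hp.le]
  have G2 : (1/2) * (gauss 9 0 1 / 9) + (1/100) * gauss 6 0 1 < (1/10) * gauss 6.2 0 1 := by
    rw [gauss_eq, gauss_eq, gauss_eq]
    have e1 : Real.exp (-(1/2) * (9:ℝ)^2) = Real.exp (-(1/2) * (6:ℝ)^2) * Real.exp (-22.5) := by
      rw [← Real.exp_add]; norm_num
    have e2 : Real.exp (-(1/2) * (6.2:ℝ)^2) = Real.exp (-(1/2) * (6:ℝ)^2) * Real.exp (-1.22) := by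
      rw [← Real.exp_add]; norm_num
    have hp : (0:ℝ) < (1 / Real.sqrt (2*Real.pi)) * Real.exp (-(1/2) * (6:ℝ)^2) := by
      have := sqrt2pi_pos; positivity
    rw [e1, e2]
    nlinarith [mul_le_mul_of_nonneg_left exp_neg_225 hp.le,
      mul_le_mul_of_nonneg_left exp_neg_122 hp.le]
  -- IVT endpoints
  have hhigh : sigEff 1 10 80 6.01 ≤ sigEff 1 10 76 10 := by
    rw [sig80, sig76,
      show (6.01 - 10 : ℝ) = -3.99 by norm_num, show (6.01 - 1 : ℝ) = 5.01 by norm_num]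
    have hs : Qtail (-4) = (∫ x in Set.Ioc (-4 : ℝ) (-3.99), gauss x 0 1) + Qtail (-3.99) :=
      Qtail_split (by norm_num)
    have hlb := le_integral_Ioc_neg (show (-3.99:ℝ) ≤ 0 by norm_num) (show (-4:ℝ) ≤ -3.99 by norm_num)
    rw [show ((-3.99:ℝ) - (-4)) = 1/100 by norm_num] at hlb
    have h501 : Qtail 5.01 ≤ Qtail 5 := Qtail_anti (by norm_num)
    have h5 : Qtail 5 ≤ gauss 5 0 1 / 5 := Qtail_le_mills (by norm_num)
    have h86 : 0 ≤ Qtail 8.6 := Qtail_nonneg _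
    linarith [G1]
  have hlow : sigEff 1 10 76 10 ≤ sigEff 1 10 80 6 := by
    rw [sig80, sig76,
      show (6 - 10 : ℝ) = -4 by norm_num, show (6 - 1 : ℝ) = 5 by norm_num]
    have h86 : Qtail 8.6 ≤ Qtail 5 := Qtail_anti (by norm_num)
    linarith
  -- solve for the matching cut value c₂ by the intermediate value theorem
  obtain ⟨c₂, hmem, hc⟩ :=
    intermediate_value_Icc' (show (6:ℝ) ≤ 6.01 by norm_num) g_cont.continuousOn
      (Set.mem_Icc.2 ⟨hhigh, hlow⟩)
  have hc' : sigEff 1 10 80 c₂ = sigEff 1 10 76 10 := hc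
  refine ⟨1, 10, 76, 10, c₂, by norm_num, by norm_num, by norm_num, hc'.symm, ?_⟩
  rw [bkg76, bkg80]
  -- background comparison
  have A1 : Qtail 6 = (∫ x in Set.Ioc (6:ℝ) 6.01, gauss x 0 1) + Qtail 6.01 :=
    Qtail_split (by norm_num)
  have A2 := integral_Ioc_le (show (0:ℝ) ≤ 6 by norm_num) (show (6:ℝ) ≤ 6.01 by norm_num)
  rw [show ((6.01:ℝ) - 6) = 1/100 by norm_num] at A2
  have A3 : Qtail 6 = (∫ x in Set.Ioc (6:ℝ) 6.2, gauss x 0 1) + Qtail 6.2 :=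
    Qtail_split (by norm_num)
  have A4 := le_integral_Ioc_pos (show (0:ℝ) ≤ 6 by norm_num) (show (6:ℝ) ≤ 6.2 by norm_num)
  rw [show ((6.2:ℝ) - 6) = 1/5 by norm_num] at A4
  have A5 : 0 ≤ Qtail 6.2 := Qtail_nonneg _
  have A6 : Qtail 9.6 ≤ Qtail 9 := Qtail_anti (by norm_num)
  have A7 : Qtail 9 ≤ gauss 9 0 1 / 9 := Qtail_le_mills (by norm_num)
  have A8 : Qtail 6.01 ≤ Qtail c₂ := Qtail_anti hmem.2
  linarith [G2]
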